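/- arXiv:math-ph/0602036 — 2 statements merged into one kernel-verified Lean document; each statement's English description precedes it below -/
import Mathlib

section
/- Let K be a field extension of the complex numbers ℂ. If the dimension of K as a ℂ-vector space is at most countable, then K = ℂ. -/
/-- Let `K` be a field extension of the complex numbers `ℂ`. If the dimension of `K` as a
`ℂ`-vector space is at most countable, then `K = ℂ` (i.e. the embedding `ℂ → K` is surjective). -/
theorem stmt_0 (K : Type*) [Field K] [Algebra ℂ K]
    (h : Module.rank ℂ K ≤ Cardinal.aleph0) :
    Function.Surjective (algebraMap ℂ K) := by
  have halg : Algebra.IsAlgebraic ℂ K := by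
    constructor
    intro x
    by_contra hx
    have ht : Transcendental ℂ x := hx
    have h1 := ht.linearIndependent_sub_inv.cardinal_lift_le_rank
    have h2 : Cardinal.continuum ≤ Cardinal.aleph0 := by
      have := h1.trans (Cardinal.lift_le.2 h)
      rw [Cardinal.mk_complex] at this
      simpa using this
    exact absurd h2 (not_le.2 Cardinal.aleph0_lt_continuum)
  exact IsAlgClosed.algebraMap_bijective_of_isIntegral.2
end

section
/- The only Lorentz-invariant Borel probability measure on Minkowski space ℝ⁴ is the Dirac measure at the origin. -/
open MeasureTheory Set

/-- A boost-like linear map on `ℝ⁴`. -/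
noncomputable def boostMap (i : Fin 4) (b : ℝ) : (Fin 4 → ℝ) →ₗ[ℝ] (Fin 4 → ℝ) where
  toFun x := fun j => if j = 0 then (5/4) * x 0 + b * x i
    else if j = i then b * x 0 + (5/4) * x i else x j
  map_add' x y := by
    funext j
    simp only [Pi.add_apply]
    split_ifs <;> ring
  map_smul' c x := by
    funext j
    simp only [Pi.smul_apply, smul_eq_mul, RingHom.id_apply]
    split_ifs <;> ring

/-- The boost as a linear equivalence, for `b² = 9/16`. -/
noncomputable def boostEquiv (i : Fin 4) (hi : i ≠ 0) (b : ℝ) (hb : b * b = 9/16) :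
    (Fin 4 → ℝ) ≃ₗ[ℝ] (Fin 4 → ℝ) :=
  { boostMap i b with
    invFun := boostMap i (-b)
    left_inv := fun x => by
      funext j
      simp only [boostMap, LinearMap.coe_mk, AddHom.coe_mk]
      split_ifs <;> simp_all <;>
        first
          | rfl
          | linear_combination (x 0) * hb
          | linear_combination (-(x 0)) * hb
          | linear_combination (x i) * hb
          | linear_combination (-(x i)) * hb
    right_inv := fun x => by
      funext j
      simp only [boostMap, LinearMap.coe_mk, AddHom.coe_mk]
      split_ifs <;> simp_all <;>
        first
          | rfl
          | linear_combination (x 0) * hb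
          | linear_combination (-(x 0)) * hb
          | linear_combination (x i) * hb
          | linear_combination (-(x i)) * hb }

@[simp] lemma boostEquiv_apply (i : Fin 4) (hi : i ≠ 0) (b : ℝ) (hb : b * b = 9/16)
    (x : Fin 4 → ℝ) (j : Fin 4) :
    boostEquiv i hi b hb x j = if j = 0 then (5/4) * x 0 + b * x i
      else if j = i then b * x 0 + (5/4) * x i else x j := rfl

/-- Key lemma: if `μ` is invariant under a linear automorphism that doubles a measurable
function `f`, then `{f ≠ 0}` is `μ`-null. -/
lemma null_of_doubling (μ : Measure (Fin 4 → ℝ)) [IsProbabilityMeasure μ]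
    (Λ : (Fin 4 → ℝ) ≃ₗ[ℝ] (Fin 4 → ℝ))
    (hinv : ∀ S : Set (Fin 4 → ℝ), MeasurableSet S → μ ((fun x => Λ x) '' S) = μ S)
    (f : (Fin 4 → ℝ) → ℝ) (hfm : Measurable f)
    (hf : ∀ x, f (Λ x) = 2 * f x) :
    μ {x | f x ≠ 0} = 0 := by
  set T : ℤ → Set (Fin 4 → ℝ) :=
    fun n => {x | (2:ℝ) ^ n ≤ |f x| ∧ |f x| < (2:ℝ) ^ (n+1)} with hT
  have hTm : ∀ n, MeasurableSet (T n) := fun n =>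
    (measurableSet_le measurable_const hfm.abs).inter
      (measurableSet_lt hfm.abs measurable_const)
  have habs : ∀ x, |f (Λ x)| = 2 * |f x| := by
    intro x
    rw [hf, abs_mul]
    norm_num
  have h2 : (2:ℝ) ≠ 0 := by norm_num
  have himg : ∀ n, (fun x => Λ x) '' T n = T (n+1) := by
    intro n
    ext y
    simp only [hT, Set.mem_image, Set.mem_setOf_eq]
    constructor
    · rintro ⟨x, ⟨h1, hlt⟩, rfl⟩
      rw [habs]
      refine ⟨?_, ?_⟩
      · rw [zpow_add_one₀ h2]; nlinarith
      · rw [show n + 1 + 1 = (n+1) + 1 by ring, zpow_add_one₀ h2]; nlinarith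
    · rintro ⟨h1, hlt⟩
      refine ⟨Λ.symm y, ⟨?_, ?_⟩, by simp⟩
      · have hh := habs (Λ.symm y)
        simp only [LinearEquiv.apply_symm_apply] at hh
        rw [zpow_add_one₀ h2] at h1
        nlinarith
      · have hh := habs (Λ.symm y)
        simp only [LinearEquiv.apply_symm_apply] at hh
        rw [show n + 1 + 1 = (n+1) + 1 by ring, zpow_add_one₀ h2] at hlt
        nlinarith
  have hstep : ∀ n : ℤ, μ (T (n+1)) = μ (T n) := fun n => by
    rw [← himg n, hinv _ (hTm n)]
  have hmeas : ∀ n, μ (T n) = μ (T 0) := by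
    intro n
    induction n using Int.induction_on with
    | zero => rfl
    | succ k ih => rw [hstep k, ih]
    | pred k ih =>
      have h1 : μ (T (-(k:ℤ))) = μ (T (-(k:ℤ) - 1)) := by
        have := hstep (-(k:ℤ) - 1)
        rwa [show (-(k:ℤ) - 1) + 1 = -k by ring] at this
      rw [← h1]; exact ih
  have hdisj : Pairwise (Function.onFun Disjoint T) := by
    have key : ∀ n m : ℤ, n < m → Disjoint (T n) (T m) := by
      intro n m hnm
      rw [Set.disjoint_left]
      intro x hxn hxm
      have h1 : (2:ℝ) ^ (n+1) ≤ (2:ℝ) ^ m :=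
        zpow_le_zpow_right₀ (by norm_num) (by omega)
      exact absurd (lt_of_lt_of_le hxn.2 (h1.trans hxm.1)) (lt_irrefl _)
    intro n m hnm
    rcases Ne.lt_or_gt hnm with hlt | hlt
    · exact key n m hlt
    · exact (key m n hlt).symm
  have hcover : {x | f x ≠ 0} ⊆ ⋃ n, T n := by
    intro x hx
    have hpos : 0 < |f x| := abs_pos.mpr hx
    refine Set.mem_iUnion.mpr ⟨Int.log 2 |f x|, ?_, ?_⟩
    · have := Int.zpow_log_le_self (b := 2) (by norm_num) hpos
      push_cast at this ⊢
      exact this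
    · have := Int.lt_zpow_succ_log_self (b := 2) (by norm_num) |f x|
      push_cast at this ⊢
      exact this
  have hT0 : μ (T 0) = 0 := by
    by_contra hne
    have hsum : ∑' n : ℤ, μ (T n) = μ (⋃ n, T n) := (measure_iUnion hdisj hTm).symm
    have htop : ∑' n : ℤ, μ (T n) = ⊤ := by
      rw [tsum_congr hmeas]
      exact ENNReal.tsum_const_eq_top_of_ne_zero hne
    have : μ (⋃ n, T n) ≤ 1 := prob_le_one
    rw [← hsum, htop] at this
    exact absurd this (by simp)
  have : μ (⋃ n, T n) = 0 := by
    have hU := (measure_iUnion (μ := μ) hdisj hTm).symm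
    rw [← hU, tsum_congr hmeas, hT0, tsum_zero]
  exact measure_mono_null hcover this

/-- The only Lorentz-invariant Borel probability measure on Minkowski space `ℝ⁴` is the Dirac
measure at the origin.  A linear automorphism `Λ` of `ℝ⁴` is a (homogeneous) Lorentz
transformation when it preserves the Minkowski quadratic form
`x₀² − x₁² − x₂² − x₃²`, and `μ` is Lorentz invariant when `μ(Λ(S)) = μ(S)` for every Borel
set `S` and every Lorentz transformation `Λ`. -/
theorem stmt_11 (μ : MeasureTheory.Measure (Fin 4 → ℝ))
    [MeasureTheory.IsProbabilityMeasure μ]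
    (h : ∀ Λ : (Fin 4 → ℝ) ≃ₗ[ℝ] (Fin 4 → ℝ),
      (∀ x : Fin 4 → ℝ,
        (Λ x 0) ^ 2 - (Λ x 1) ^ 2 - (Λ x 2) ^ 2 - (Λ x 3) ^ 2
          = (x 0) ^ 2 - (x 1) ^ 2 - (x 2) ^ 2 - (x 3) ^ 2) →
      ∀ S : Set (Fin 4 → ℝ), MeasurableSet S → μ ((fun x => Λ x) '' S) = μ S) :
    μ = MeasureTheory.Measure.dirac 0 := by
  -- for each spatial direction i and sign s, the set {x₀ + s·xᵢ ≠ 0} is null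
  have key : ∀ i : Fin 4, i ≠ 0 → ∀ s : ℝ, s = 1 ∨ s = -1 →
      μ {x | x 0 + s * x (i : Fin 4) ≠ 0} = 0 := by
    intro i hi s hs
    have hb : (3/4 * s) * (3/4 * s) = 9/16 := by
      rcases hs with rfl | rfl <;> norm_num
    have hcases : i = 1 ∨ i = 2 ∨ i = 3 := by
      fin_cases i
      · exact absurd rfl hi
      all_goals decide
    rcases hcases with rfl | rfl | rfl <;>
    · set Λ := boostEquiv _ hi (3/4 * s) hb with hΛ
      have hform : ∀ x : Fin 4 → ℝ,
          (Λ x 0) ^ 2 - (Λ x 1) ^ 2 - (Λ x 2) ^ 2 - (Λ x 3) ^ 2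
            = (x 0) ^ 2 - (x 1) ^ 2 - (x 2) ^ 2 - (x 3) ^ 2 := by
        intro x
        simp only [hΛ, boostEquiv_apply]
        simp only [show ((1:Fin 4) = 0) = False from by simp, show ((2:Fin 4) = 0) = False from by simp,
          show ((3:Fin 4) = 0) = False from by simp, show ((0:Fin 4) = 0) = True from by simp,
          show ((1:Fin 4) = 1) = True from by simp, show ((2:Fin 4) = 2) = True from by simp,
          show ((3:Fin 4) = 3) = True from by simp, show ((0:Fin 4) = 1) = False from by simp,
          show ((0:Fin 4) = 2) = False from by simp, show ((0:Fin 4) = 3) = False from by simp,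
          show ((1:Fin 4) = 2) = False from by simp, show ((1:Fin 4) = 3) = False from by simp,
          show ((2:Fin 4) = 1) = False from by simp, show ((2:Fin 4) = 3) = False from by simp,
          show ((3:Fin 4) = 1) = False from by simp, show ((3:Fin 4) = 2) = False from by simp,
          if_true, if_false]
        first
          | ring1
          | linear_combination (x 1 ^ 2 - x 0 ^ 2) * hb
          | linear_combination (x 2 ^ 2 - x 0 ^ 2) * hb
          | linear_combination (x 3 ^ 2 - x 0 ^ 2) * hb
      have hinv := h Λ hform
      apply null_of_doubling μ Λ hinv
      · exact (measurable_pi_apply 0).add (by fun_prop)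
      · intro x
        simp only [hΛ, boostEquiv_apply]
        simp only [show ((1:Fin 4) = 0) = False from by simp, show ((2:Fin 4) = 0) = False from by simp,
          show ((3:Fin 4) = 0) = False from by simp, show ((0:Fin 4) = 0) = True from by simp,
          show ((1:Fin 4) = 1) = True from by simp, show ((2:Fin 4) = 2) = True from by simp,
          show ((3:Fin 4) = 3) = True from by simp, if_true, if_false]
        rcases hs with rfl | rfl <;> ring1
  -- hence the complement of {0} is null
  have hnull : μ ({(0 : Fin 4 → ℝ)}ᶜ) = 0 := by
    have hsub : ({(0 : Fin 4 → ℝ)}ᶜ : Set (Fin 4 → ℝ)) ⊆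
        {x | x 0 + 1 * x 1 ≠ 0} ∪ {x | x 0 + (-1) * x 1 ≠ 0} ∪
        {x | x 0 + 1 * x 2 ≠ 0} ∪ {x | x 0 + (-1) * x 2 ≠ 0} ∪
        {x | x 0 + 1 * x 3 ≠ 0} ∪ {x | x 0 + (-1) * x 3 ≠ 0} := by
      intro x hx
      by_contra hcon
      simp only [Set.mem_union, Set.mem_setOf_eq, not_or, not_not] at hcon
      obtain ⟨⟨⟨⟨⟨h1, h2⟩, h3⟩, h4⟩, h5⟩, h6⟩ := hcon
      apply hx
      have e0 : x 0 = 0 := by linarith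
      have e1 : x 1 = 0 := by linarith
      have e2 : x 2 = 0 := by linarith
      have e3 : x 3 = 0 := by linarith
      have : x = 0 := by
        funext j
        fin_cases j <;> simpa
      simp [this]
    refine measure_mono_null hsub ?_
    have k1 := key 1 (by decide) 1 (Or.inl rfl)
    have k2 := key 1 (by decide) (-1) (Or.inr rfl)
    have k3 := key 2 (by decide) 1 (Or.inl rfl)
    have k4 := key 2 (by decide) (-1) (Or.inr rfl)
    have k5 := key 3 (by decide) 1 (Or.inl rfl)
    have k6 := key 3 (by decide) (-1) (Or.inr rfl)
    repeat' apply measure_union_null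
    all_goals assumption
  -- conclude μ = dirac 0
  ext s hs
  rw [Measure.dirac_apply' 0 hs]
  by_cases h0 : (0 : Fin 4 → ℝ) ∈ s
  · have hle : μ sᶜ = 0 := measure_mono_null (by
      intro x hxc
      simp only [Set.mem_compl_iff, Set.mem_singleton_iff]
      intro hx0
      exact hxc (hx0 ▸ h0)) hnull
    have : μ s = 1 := by
      have := measure_add_measure_compl (μ := μ) hs
      rw [hle, add_zero] at this
      simpa using this
    rw [this]
    simp [Set.indicator_of_mem h0]
  · have : μ s = 0 := measure_mono_null (by
      intro x hxs
      simp only [Set.mem_compl_iff, Set.mem_singleton_iff]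
      intro hx0
      exact h0 (hx0 ▸ hxs)) hnull
    rw [this]
    simp [Set.indicator_of_notMem h0]
end
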